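/- arXiv:1101.1990 — 2 statements merged into one kernel-verified Lean document; each statement's English description precedes it below -/
import Mathlib

section
/- Let T > 0, let A₁ be a real Banach space, let M₊ be a seminormed nonnegative cone in A₁ that is compactly embedded in A₁, and let 1 ≤ p < ∞ and p₁ = 1. Then Y₊ is compactly embedded in L^p(0,T; A₁): every sequence (u_n) in Y₊ with sup_n [u_n]_{Y₊} < ∞ has a subsequence that converges in the norm of L^p(0,T; A₁). -/
open Filter Topology MeasureTheory
open scoped ENNReal

lemma aux_sum_rpow_le {ι : Type*} (s : Finset ι) (f : ι → ℝ≥0∞) {q : ℝ} (hq : 1 ≤ q) :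
    ∑ i ∈ s, f i ^ q ≤ (∑ i ∈ s, f i) ^ q := by
  induction s using Finset.cons_induction with
  | empty => simp [ENNReal.zero_rpow_of_pos (lt_of_lt_of_le zero_lt_one hq)]
  | cons i s hi ih =>
    rw [Finset.sum_cons, Finset.sum_cons]
    calc f i ^ q + ∑ j ∈ s, f j ^ q ≤ f i ^ q + (∑ j ∈ s, f j) ^ q := by gcongr
    _ ≤ _ := ENNReal.add_rpow_le_rpow_add _ _ hq

lemma aux_iUnion_Ioc (σ : ℝ) (hσ : 0 ≤ σ) (m : ℕ) :
    ⋃ k ∈ Finset.range m, Set.Ioc ((k:ℝ)*σ) (((k:ℝ)+1)*σ) = Set.Ioc 0 ((m:ℝ)*σ) := by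
  induction m with
  | zero => simp
  | succ m ih =>
    rw [Finset.range_add_one, Finset.set_biUnion_insert, ih, Set.union_comm,
      show (((m:ℕ):ℝ)+1) = ((m+1 : ℕ) : ℝ) by push_cast; ring]
    exact Set.Ioc_union_Ioc_eq_Ioc (by positivity) (by push_cast; nlinarith)

lemma aux_compact_closure {A₁ : Type*} [NormedAddCommGroup A₁]
    {S : Set A₁} {ν : A₁ → ℝ}
    (hcpt : ∀ a : ℕ → A₁, (∀ n, a n ∈ S) → (∃ K : ℝ, ∀ n, ν (a n) ≤ K) →
      ∃ (ψ : ℕ → ℕ) (l : A₁), StrictMono ψ ∧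
        Tendsto (fun n => a (ψ n)) atTop (𝓝 l))
    (R : ℝ) : IsCompact (closure {φ : A₁ | φ ∈ S ∧ ν φ ≤ R}) := by
  apply IsSeqCompact.isCompact
  intro x hx
  have hex : ∀ n : ℕ, ∃ y, (y ∈ S ∧ ν y ≤ R) ∧ dist (x n) y < 1/((n:ℝ)+1) := by
    intro n
    obtain ⟨y, hy1, hy2⟩ := Metric.mem_closure_iff.mp (hx n) (1/((n:ℝ)+1)) (by positivity)
    exact ⟨y, hy1, hy2⟩
  choose y hy hdy using hex
  obtain ⟨ψ, l, hψ, hl⟩ := hcpt y (fun n => (hy n).1) ⟨R, fun n => (hy n).2⟩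
  refine ⟨l, ?_, ψ, hψ, ?_⟩
  · exact mem_closure_of_tendsto hl
      (Filter.Eventually.of_forall fun n => hy (ψ n))
  · rw [tendsto_iff_dist_tendsto_zero]
    have hb : ∀ n, dist ((x ∘ ψ) n) l ≤ 1/((n:ℝ)+1) + dist (y (ψ n)) l := by
      intro n
      have h1 := dist_triangle (x (ψ n)) (y (ψ n)) l
      have h2 : dist (x (ψ n)) (y (ψ n)) < 1/((ψ n : ℝ)+1) := hdy (ψ n)
      have h3 : 1/((ψ n:ℝ)+1) ≤ 1/((n:ℝ)+1) := by
        apply one_div_le_one_div_of_le (by positivity)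
        have hle : n ≤ ψ n := hψ.le_apply
        have := (Nat.cast_le (α := ℝ)).2 hle
        linarith
      simp only [Function.comp_apply]
      linarith
    have hlim : Tendsto (fun n : ℕ => 1/((n:ℝ)+1) + dist (y (ψ n)) l) atTop (𝓝 0) := by
      have h1 := tendsto_one_div_add_atTop_nhds_zero_nat (𝕜 := ℝ)
      have h2 := tendsto_iff_dist_tendsto_zero.mp hl
      simpa using h1.add h2
    exact squeeze_zero (fun n => dist_nonneg) hb hlim

lemma aux_coeFn_sum_indicatorConstLp {α E ι : Type*} [MeasurableSpace α] {μ : Measure α}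
    [NormedAddCommGroup E] (s : Finset ι) (p : ℝ≥0∞) (t : ι → Set α)
    (ht : ∀ i, MeasurableSet (t i)) (hμt : ∀ i, μ (t i) ≠ ∞) (c : ι → E) :
    ⇑(∑ i ∈ s, indicatorConstLp p (ht i) (hμt i) (c i))
      =ᵐ[μ] fun x => ∑ i ∈ s, (t i).indicator (fun _ => c i) x := by
  induction s using Finset.cons_induction with
  | empty => simp only [Finset.sum_empty]; exact Lp.coeFn_zero _ _ _
  | cons i s hi ih =>
    simp only [Finset.sum_cons]
    filter_upwards [Lp.coeFn_add (indicatorConstLp p (ht i) (hμt i) (c i))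
      (∑ j ∈ s, indicatorConstLp p (ht j) (hμt j) (c j)),
      indicatorConstLp_coeFn (p := p) (hs := ht i) (hμs := hμt i) (c := c i), ih] with x h1 h2 h3
    rw [h1, Pi.add_apply, h2, h3]



/-- Lemma 2, part (b): if M₊ is compactly embedded in the Banach space A₁,
1 ≤ p < ∞ and p₁ = 1, then Y₊ is compactly embedded in L^p(0,T;A₁): every
[·]_{Y₊}-bounded sequence in Y₊ has a subsequence converging in L^p(0,T;A₁). -/
theorem stmt7
    {A₁ : Type*} [NormedAddCommGroup A₁] [NormedSpace ℝ A₁] [CompleteSpace A₁]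
    (T : ℝ) (hT : 0 < T)
    -- M₊ = S is a seminormed nonnegative cone in A₁ with seminorm ν
    (S : Set A₁) (ν : A₁ → ℝ)
    (hcone : ∀ φ ∈ S, ∀ c : ℝ, 0 ≤ c → c • φ ∈ S)
    (hν0 : ∀ φ ∈ S, 0 ≤ ν φ)
    (hνeq0 : ∀ φ ∈ S, (ν φ = 0 ↔ φ = 0))
    (hνhom : ∀ φ ∈ S, ∀ c : ℝ, 0 ≤ c → ν (c • φ) = c * ν φ)
    -- M₊ is embedded in A₁
    (hemb : ∃ K₀ > (0 : ℝ), ∀ φ ∈ S, ‖φ‖ ≤ K₀ * ν φ)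
    -- the embedding of M₊ in A₁ is compact
    (hcpt : ∀ a : ℕ → A₁, (∀ n, a n ∈ S) → (∃ K : ℝ, ∀ n, ν (a n) ≤ K) →
      ∃ (ψ : ℕ → ℕ) (l : A₁), StrictMono ψ ∧
        Tendsto (fun n => a (ψ n)) atTop (𝓝 l))
    -- 1 ≤ p < ∞ and p₁ = 1
    (p : ℝ≥0∞) (hp : 1 ≤ p) (hp' : p ≠ ⊤)
    -- (u_n) is a sequence in Y₊, with derivatives (w_n)
    (u : ℕ → ℝ → A₁) (w : ℕ → ℝ → A₁)
    (huS : ∀ n, ∀ t ∈ Set.Icc (0 : ℝ) T, u n t ∈ S)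
    (humeas : ∀ n, AEStronglyMeasurable (u n) (volume.restrict (Set.Ioc (0 : ℝ) T)))
    (hνmeas : ∀ n, AEMeasurable (fun t => ν (u n t)) (volume.restrict (Set.Ioc (0 : ℝ) T)))
    (hwint : ∀ n, IntegrableOn (w n) (Set.Ioc (0 : ℝ) T))
    (hrep : ∀ n, ∀ᵐ t ∂volume.restrict (Set.Icc (0 : ℝ) T),
      u n t = u n 0 + ∫ s in (0 : ℝ)..t, w n s)
    -- the sequence is bounded in Y₊: sup_n [u_n]_{Y₊} < ∞
    (K : ℝ)
    (hbound : ∀ n,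
      eLpNorm (fun t => ν (u n t)) p (volume.restrict (Set.Ioc (0 : ℝ) T))
        + eLpNorm (w n) 1 (volume.restrict (Set.Ioc (0 : ℝ) T)) ≤ ENNReal.ofReal K) :
    ∃ ψ : ℕ → ℕ, StrictMono ψ ∧
      ∃ g : ℝ → A₁,
        Tendsto
          (fun j => eLpNorm (fun t => u (ψ j) t - g t) p (volume.restrict (Set.Ioc (0 : ℝ) T)))
          atTop (𝓝 0) := by
  obtain ⟨K₀, hK₀pos, hK₀⟩ := hemb
  set μ := volume.restrict (Set.Ioc (0 : ℝ) T) with hμdef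
  haveI : Fact (1 ≤ p) := ⟨hp⟩
  have hp0 : p ≠ 0 := (lt_of_lt_of_le zero_lt_one hp).ne'
  have hp'1 : 1 ≤ p.toReal := by
    rw [← ENNReal.toReal_one]
    exact ENNReal.toReal_mono hp' hp
  have hp'0 : (0:ℝ) < p.toReal := lt_of_lt_of_le one_pos hp'1
  have hp'ne : p.toReal ≠ 0 := hp'0.ne'
  set KE := ENNReal.ofReal K with hKEdef
  have hKEtop : KE ≠ ∞ := ENNReal.ofReal_ne_top
  have hIccsub : Set.Ioc (0:ℝ) T ⊆ Set.Icc 0 T := Set.Ioc_subset_Icc_self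
  -- L¹ bound on the derivatives
  have hw1 : ∀ n, ∫⁻ t, ‖w n t‖ₑ ∂μ ≤ KE := by
    intro n
    have := le_trans le_add_self (hbound n)
    rwa [eLpNorm_one_eq_lintegral_enorm] at this
  -- Lᵖ bound on ν ∘ u
  have hν : ∀ n, ∫⁻ t, (ENNReal.ofReal (ν (u n t))) ^ p.toReal ∂μ ≤ KE ^ p.toReal := by
    intro n
    have h1 : eLpNorm (fun t => ν (u n t)) p μ ≤ KE := le_trans le_self_add (hbound n)
    have h2 := ENNReal.rpow_le_rpow h1 hp'0.le
    rw [eLpNorm_eq_lintegral_rpow_enorm_toReal hp0 hp', ← ENNReal.rpow_mul,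
      one_div_mul_cancel hp'ne, ENNReal.rpow_one] at h2
    refine le_trans (lintegral_mono fun t => ?_) h2
    apply ENNReal.rpow_le_rpow _ hp'0.le
    rw [← ofReal_norm, Real.norm_eq_abs]
    exact ENNReal.ofReal_le_ofReal (le_abs_self _)
  -- each uₙ is in Lᵖ
  have hmem : ∀ n, MemLp (u n) p μ := by
    intro n
    refine ⟨humeas n, ?_⟩
    have hb : ∀ᵐ t ∂μ, ‖u n t‖ ≤ ‖K₀ * ν (u n t)‖ := by
      filter_upwards [ae_restrict_mem measurableSet_Ioc] with t ht
      have h1 := hK₀ _ (huS n t (hIccsub ht))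
      have h2 : 0 ≤ K₀ * ν (u n t) := mul_nonneg hK₀pos.le (hν0 _ (huS n t (hIccsub ht)))
      rwa [Real.norm_eq_abs, abs_of_nonneg h2]
    calc eLpNorm (u n) p μ ≤ eLpNorm (fun t => K₀ * ν (u n t)) p μ := eLpNorm_mono_ae hb
    _ = ‖K₀‖ₑ * eLpNorm (fun t => ν (u n t)) p μ := by
        simpa [Pi.smul_def, smul_eq_mul] using eLpNorm_const_smul (c := K₀) (f := fun t => ν (u n t)) (p := p) (μ := μ)
    _ ≤ ‖K₀‖ₑ * KE := by gcongr; exact le_trans le_self_add (hbound n)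
    _ < ∞ := ENNReal.mul_lt_top ENNReal.coe_lt_top hKEtop.lt_top
  set U : ℕ → Lp A₁ p μ := fun n => (hmem n).toLp (u n) with hUdef
  have key : ∀ ε : ℝ, 0 < ε →
      ∃ C : Set (Lp A₁ p μ), IsCompact C ∧ ∀ n, ∃ c ∈ C, dist (U n) c ≤ ε := by
    intro ε hε
    have hM0 : (0:ℝ) ≤ KE.toReal := ENNReal.toReal_nonneg
    have hcpos : 0 < min 1 ((ε / (KE.toReal + 1)) ^ p.toReal) := by
      have h1 : 0 < ε / (KE.toReal + 1) := by positivity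
      exact lt_min one_pos (Real.rpow_pos_of_pos h1 _)
    obtain ⟨m, hm⟩ := exists_nat_gt (T / min 1 ((ε / (KE.toReal + 1)) ^ p.toReal))
    have hmpos : (0:ℝ) < m := lt_trans (div_pos hT hcpos) hm
    set σ := T / (m:ℝ) with hσdef
    have hσpos : 0 < σ := div_pos hT hmpos
    have hσlt : σ < min 1 ((ε / (KE.toReal + 1)) ^ p.toReal) := by
      rw [hσdef, div_lt_iff₀ hmpos]
      have h2 := (div_lt_iff₀ hcpos).mp hm
      nlinarith
    set I : ℕ → Set ℝ := fun k => Set.Ioc ((k:ℝ)*σ) (((k:ℝ)+1)*σ) with hIdef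
    have hImeas : ∀ k : ℕ, MeasurableSet (I k) := fun k => measurableSet_Ioc
    have hcover : ⋃ k ∈ Finset.range m, I k = Set.Ioc 0 T := by
      have h3 := aux_iUnion_Ioc σ hσpos.le m
      rwa [show (m:ℝ) * σ = T by rw [hσdef]; field_simp] at h3
    have hIsub : ∀ k, k < m → I k ⊆ Set.Ioc 0 T := by
      intro k hk
      rw [← hcover]
      exact Set.subset_biUnion_of_mem (Finset.mem_range.mpr hk)
    have hIdisj : ∀ (k l : ℕ), k ≠ l → Disjoint (I k) (I l) := by
      intro k l hkl
      wlog h : k < l generalizing k l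
      · exact (this l k hkl.symm (by omega)).symm
      rw [Set.disjoint_left]
      rintro t ⟨_, h2⟩ ⟨h3, _⟩
      have hkl' : ((k:ℝ)+1) ≤ (l:ℝ) := by exact_mod_cast h
      nlinarith [mul_le_mul_of_nonneg_right hkl' hσpos.le]
    have hvolI : ∀ k : ℕ, volume (I k) = ENNReal.ofReal σ := by
      intro k
      simp only [hIdef]
      rw [Real.volume_Ioc]
      congr 1
      ring
    have hμI : ∀ k : ℕ, μ (I k) ≠ ∞ := by
      intro k
      rw [hμdef, Measure.restrict_apply' measurableSet_Ioc]
      exact ne_top_of_le_ne_top (by rw [hvolI k]; exact ENNReal.ofReal_ne_top)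
        (measure_mono Set.inter_subset_left)
    have hσE0 : ENNReal.ofReal σ ≠ 0 := by simp [ENNReal.ofReal_eq_zero, not_le, hσpos]
    have hσEtop : ENNReal.ofReal σ ≠ ∞ := ENNReal.ofReal_ne_top
    have h1p : (0:ℝ) ≤ 1 / p.toReal := one_div_nonneg.mpr hp'0.le
    set RE : ℝ≥0∞ := KE * (ENNReal.ofReal σ)⁻¹ ^ (1/p.toReal) + 1 with hREdef
    have hREtop : RE ≠ ∞ := by
      apply ENNReal.add_ne_top.mpr
      exact ⟨ENNReal.mul_ne_top hKEtop
        (ENNReal.rpow_ne_top_of_nonneg h1p (ENNReal.inv_ne_top.mpr hσE0)), ENNReal.one_ne_top⟩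
    set R := RE.toReal with hRdef
    have hofR : ENNReal.ofReal R = RE := ENNReal.ofReal_toReal hREtop
    -- node selection
    have hnode : ∀ n : ℕ, ∀ k : Fin m, ∃ τ, τ ∈ I (k:ℕ) ∧
        (u n τ = u n 0 + ∫ s in (0:ℝ)..τ, w n s) ∧ ν (u n τ) ≤ R := by
      intro n k
      by_contra hcon
      push_neg at hcon
      have hae : ∀ᵐ t ∂volume.restrict (I (k:ℕ)), RE ≤ ENNReal.ofReal (ν (u n t)) := by
        have hIk_Icc : I (k:ℕ) ⊆ Set.Icc 0 T := (hIsub _ k.isLt).trans hIccsub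
        have h1 : ∀ᵐ t ∂volume.restrict (I (k:ℕ)),
            u n t = u n 0 + ∫ s in (0:ℝ)..t, w n s :=
          ae_restrict_of_ae_restrict_of_subset hIk_Icc (hrep n)
        filter_upwards [h1, ae_restrict_mem (hImeas (k:ℕ))] with t h2 h3
        have h4 : R < ν (u n t) := hcon t h3 h2
        rw [← hofR]
        exact ENNReal.ofReal_le_ofReal h4.le
      have h5 : RE ^ p.toReal * ENNReal.ofReal σ ≤ KE ^ p.toReal := by
        have h6 : ∫⁻ _ in I (k:ℕ), RE ^ p.toReal ∂volume
            ≤ ∫⁻ t in I (k:ℕ), (ENNReal.ofReal (ν (u n t))) ^ p.toReal ∂volume :=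
          lintegral_mono_ae (hae.mono fun t ht => ENNReal.rpow_le_rpow ht hp'0.le)
        rw [setLIntegral_const, hvolI (k:ℕ)] at h6
        refine h6.trans (le_trans ?_ (hν n))
        rw [hμdef]
        exact lintegral_mono_set (hIsub _ k.isLt)
      have h8 : KE ^ p.toReal + ENNReal.ofReal σ ≤ RE ^ p.toReal * ENNReal.ofReal σ := by
        have h9 : (KE * (ENNReal.ofReal σ)⁻¹ ^ (1/p.toReal)) ^ p.toReal + (1:ℝ≥0∞) ^ p.toReal
            ≤ RE ^ p.toReal := ENNReal.add_rpow_le_rpow_add _ _ hp'1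
        have h10 : (KE * (ENNReal.ofReal σ)⁻¹ ^ (1/p.toReal)) ^ p.toReal
            = KE ^ p.toReal * (ENNReal.ofReal σ)⁻¹ := by
          rw [ENNReal.mul_rpow_of_nonneg _ _ hp'0.le, ← ENNReal.rpow_mul,
            one_div_mul_cancel hp'ne, ENNReal.rpow_one]
        rw [h10, ENNReal.one_rpow] at h9
        calc KE ^ p.toReal + ENNReal.ofReal σ
            = (KE ^ p.toReal * (ENNReal.ofReal σ)⁻¹ + 1) * ENNReal.ofReal σ := by
              rw [add_mul, one_mul, mul_assoc, ENNReal.inv_mul_cancel hσE0 hσEtop, mul_one]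
        _ ≤ RE ^ p.toReal * ENNReal.ofReal σ := mul_le_mul_left h9 _
      have hKEfin : KE ^ p.toReal ≠ ∞ := ENNReal.rpow_ne_top_of_nonneg hp'0.le hKEtop
      have hlt : KE ^ p.toReal < KE ^ p.toReal + ENNReal.ofReal σ :=
        ENNReal.lt_add_right hKEfin hσE0
      exact absurd (h8.trans h5) (not_le.mpr hlt)
    choose τ hτI hτrep hτν using hnode
    set pcf : ℕ → ℝ → A₁ := fun n t =>
      ∑ k : Fin m, (I (k:ℕ)).indicator (fun _ => u n (τ n k)) t with hpcfdef
    have hpcval : ∀ n, ∀ k : Fin m, ∀ t ∈ I (k:ℕ), pcf n t = u n (τ n k) := by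
      intro n k t ht
      simp only [hpcfdef]
      rw [Finset.sum_eq_single k]
      · exact Set.indicator_of_mem ht _
      · intro j _ hj
        refine Set.indicator_of_notMem (fun htj => ?_) _
        exact (Set.disjoint_left.mp (hIdisj _ _ (fun hh => hj (Fin.val_injective hh))) htj) ht
      · intro hk
        exact absurd (Finset.mem_univ k) hk
    have hwII : ∀ n, ∀ r, r ∈ Set.Ioc (0:ℝ) T → IntervalIntegrable (w n) volume 0 r := by
      intro n r hr
      rw [intervalIntegrable_iff]
      apply (hwint n).mono_set
      rw [Set.uIoc_of_le hr.1.le]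
      exact Set.Ioc_subset_Ioc le_rfl hr.2
    -- the approximation estimate
    have hest : ∀ n, eLpNorm (fun t => u n t - pcf n t) p μ
        ≤ KE * (ENNReal.ofReal σ) ^ (1/p.toReal) := by
      intro n
      set a : ℕ → ℝ≥0∞ := fun k => ∫⁻ t in I k, ‖w n t‖ₑ ∂volume with hadef
      have hak : ∀ k : Fin m, ∀ᵐ t ∂volume.restrict (I (k:ℕ)),
          ‖u n t - pcf n t‖ₑ ^ p.toReal ≤ a (k:ℕ) ^ p.toReal := by
        intro k
        have hIk_Icc : I (k:ℕ) ⊆ Set.Icc 0 T := (hIsub _ k.isLt).trans hIccsub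
        have h1 : ∀ᵐ t ∂volume.restrict (I (k:ℕ)),
            u n t = u n 0 + ∫ s in (0:ℝ)..t, w n s :=
          ae_restrict_of_ae_restrict_of_subset hIk_Icc (hrep n)
        filter_upwards [h1, ae_restrict_mem (hImeas (k:ℕ))] with t h2 h3
        apply ENNReal.rpow_le_rpow _ hp'0.le
        rw [hpcval n k t h3]
        have hτIk := hτI n k
        have hdiff : u n t - u n (τ n k) = ∫ s in (τ n k)..t, w n s := by
          rw [h2, hτrep n k, add_sub_add_left_eq_sub]
          exact intervalIntegral.integral_interval_sub_left
            (hwII n t (hIsub _ k.isLt h3)) (hwII n (τ n k) (hIsub _ k.isLt hτIk))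
        rw [hdiff, ← ofReal_norm]
        have h4 : ‖∫ s in (τ n k)..t, w n s‖ ≤ ∫ s in Set.uIoc (τ n k) t, ‖w n s‖ ∂volume :=
          intervalIntegral.norm_integral_le_integral_norm_uIoc
        have hsub : Set.uIoc (τ n k) t ⊆ I (k:ℕ) := by
          rw [Set.uIoc]
          exact Set.Ioc_subset_Ioc (le_min hτIk.1.le h3.1.le) (max_le hτIk.2 h3.2)
        have h5 : ∫ s in Set.uIoc (τ n k) t, ‖w n s‖ ∂volume
            ≤ ∫ s in I (k:ℕ), ‖w n s‖ ∂volume := by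
          apply setIntegral_mono_set (((hwint n).mono_set (hIsub _ k.isLt)).norm)
          · exact Filter.Eventually.of_forall fun s => norm_nonneg _
          · exact HasSubset.Subset.eventuallyLE hsub
        calc ENNReal.ofReal ‖∫ s in (τ n k)..t, w n s‖
            ≤ ENNReal.ofReal (∫ s in I (k:ℕ), ‖w n s‖ ∂volume) :=
              ENNReal.ofReal_le_ofReal (h4.trans h5)
        _ = a (k:ℕ) :=
              ofReal_integral_norm_eq_lintegral_enorm ((hwint n).mono_set (hIsub _ k.isLt))
      have hperk : ∀ k ∈ Finset.range m,
          ∫⁻ t in I k, ‖u n t - pcf n t‖ₑ ^ p.toReal ∂volume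
          ≤ a k ^ p.toReal * ENNReal.ofReal σ := by
        intro k hk
        rw [Finset.mem_range] at hk
        refine le_trans (lintegral_mono_ae (hak ⟨k, hk⟩)) ?_
        rw [setLIntegral_const, hvolI k]
      have hsplit : ∫⁻ t, ‖u n t - pcf n t‖ₑ ^ p.toReal ∂μ
          = ∑ k ∈ Finset.range m,
            ∫⁻ t in I k, ‖u n t - pcf n t‖ₑ ^ p.toReal ∂volume := by
        rw [hμdef, ← hcover]
        exact lintegral_biUnion_finset (fun x _ y _ hxy => hIdisj x y hxy)
          (fun k _ => hImeas k) _
      have hwsum : ∑ k ∈ Finset.range m, a k ≤ KE := by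
        have h6 : ∑ k ∈ Finset.range m, a k = ∫⁻ t, ‖w n t‖ₑ ∂μ := by
          rw [hμdef, ← hcover]
          exact (lintegral_biUnion_finset (fun x _ y _ hxy => hIdisj x y hxy)
            (fun k _ => hImeas k) _).symm
        rw [h6]
        exact hw1 n
      have hint : ∫⁻ t, ‖u n t - pcf n t‖ₑ ^ p.toReal ∂μ
          ≤ KE ^ p.toReal * ENNReal.ofReal σ := by
        rw [hsplit]
        calc ∑ k ∈ Finset.range m,
            ∫⁻ t in I k, ‖u n t - pcf n t‖ₑ ^ p.toReal ∂volume
            ≤ ∑ k ∈ Finset.range m, a k ^ p.toReal * ENNReal.ofReal σ :=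
              Finset.sum_le_sum hperk
        _ = (∑ k ∈ Finset.range m, a k ^ p.toReal) * ENNReal.ofReal σ :=
              (Finset.sum_mul _ _ _).symm
        _ ≤ (∑ k ∈ Finset.range m, a k) ^ p.toReal * ENNReal.ofReal σ :=
              mul_le_mul_left (aux_sum_rpow_le _ _ hp'1) _
        _ ≤ KE ^ p.toReal * ENNReal.ofReal σ :=
              mul_le_mul_left (ENNReal.rpow_le_rpow hwsum hp'0.le) _
      rw [eLpNorm_eq_lintegral_rpow_enorm_toReal hp0 hp']
      refine le_trans (ENNReal.rpow_le_rpow hint h1p) (le_of_eq ?_)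
      rw [ENNReal.mul_rpow_of_nonneg _ _ h1p, ← ENNReal.rpow_mul,
        mul_one_div, div_self hp'ne, ENNReal.rpow_one]
    -- the compact approximating set
    have hC0 : IsCompact (closure {φ : A₁ | φ ∈ S ∧ ν φ ≤ R}) := aux_compact_closure hcpt R
    have hCm : IsCompact (Set.pi Set.univ fun _ : Fin m => closure {φ : A₁ | φ ∈ S ∧ ν φ ≤ R}) :=
      isCompact_univ_pi fun _ => hC0
    have hindcont : ∀ k : Fin m, Continuous fun c : A₁ =>
        (indicatorConstLp p (hImeas (k:ℕ)) (hμI (k:ℕ)) c : Lp A₁ p μ) := by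
      intro k
      refine AddMonoidHomClass.continuous_of_bound
        (AddMonoidHom.mk' (fun c : A₁ =>
          (indicatorConstLp p (hImeas (k:ℕ)) (hμI (k:ℕ)) c : Lp A₁ p μ))
          (fun c c' => (indicatorConstLp_add (c := c) (c' := c')).symm))
        ((μ (I (k:ℕ))).toReal ^ (1/p.toReal)) (fun c => ?_)
      rw [mul_comm]
      exact norm_indicatorConstLp_le (hs := hImeas (k:ℕ)) (hμs := hμI (k:ℕ)) (c := c)
    set Φ : (Fin m → A₁) → Lp A₁ p μ := fun c =>
      ∑ k : Fin m, indicatorConstLp p (hImeas (k:ℕ)) (hμI (k:ℕ)) (c k) with hΦdef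
    have hΦcont : Continuous Φ := by
      apply continuous_finset_sum
      intro k _
      exact (hindcont k).comp (continuous_apply k)
    refine ⟨Φ '' (Set.pi Set.univ fun _ : Fin m => closure {φ : A₁ | φ ∈ S ∧ ν φ ≤ R}),
      hCm.image hΦcont, ?_⟩
    intro n
    refine ⟨Φ (fun k => u n (τ n k)), Set.mem_image_of_mem _ ?_, ?_⟩
    · exact Set.mem_univ_pi.mpr fun k =>
        subset_closure ⟨huS n _ (((hIsub _ k.isLt).trans hIccsub) (hτI n k)), hτν n k⟩
    · have hcoe : ⇑(U n - Φ fun k => u n (τ n k)) =ᵐ[μ] fun t => u n t - pcf n t := by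
        filter_upwards [Lp.coeFn_sub (U n) (Φ fun k => u n (τ n k)), (hmem n).coeFn_toLp,
          aux_coeFn_sum_indicatorConstLp Finset.univ p (fun k : Fin m => I (k:ℕ))
            (fun k => hImeas (k:ℕ)) (fun k => hμI (k:ℕ)) (fun k => u n (τ n k))] with t h1 h2 h3
        rw [h1, Pi.sub_apply, h2]
        have h4 : (⇑(Φ fun k => u n (τ n k)) : ℝ → A₁) t = pcf n t := by
          simp only [hpcfdef]
          exact h3
        rw [h4]
      have hdistb : dist (U n) (Φ fun k => u n (τ n k))
          ≤ (KE * (ENNReal.ofReal σ) ^ (1/p.toReal)).toReal := by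
        rw [dist_eq_norm, Lp.norm_def, eLpNorm_congr_ae hcoe]
        apply ENNReal.toReal_mono
        · exact ENNReal.mul_ne_top hKEtop (ENNReal.rpow_ne_top_of_nonneg h1p hσEtop)
        · exact hest n
      refine hdistb.trans ?_
      rw [ENNReal.toReal_mul, ← ENNReal.toReal_rpow, ENNReal.toReal_ofReal hσpos.le]
      have h1 : σ ^ (1/p.toReal) ≤ ε / (KE.toReal + 1) := by
        have h2 : σ ≤ (ε/(KE.toReal+1)) ^ p.toReal := (lt_min_iff.mp hσlt).2.le
        calc σ ^ (1/p.toReal) ≤ ((ε/(KE.toReal+1)) ^ p.toReal) ^ (1/p.toReal) :=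
              Real.rpow_le_rpow hσpos.le h2 h1p
        _ = ε/(KE.toReal+1) := by
              rw [← Real.rpow_mul (by positivity), mul_one_div, div_self hp'ne, Real.rpow_one]
      calc KE.toReal * σ ^ (1/p.toReal) ≤ KE.toReal * (ε/(KE.toReal+1)) :=
            mul_le_mul_of_nonneg_left h1 hM0
      _ ≤ (KE.toReal+1) * (ε/(KE.toReal+1)) :=
            mul_le_mul_of_nonneg_right (by linarith) (by positivity)
      _ = ε := by field_simp
  -- total boundedness and extraction of a convergent subsequence
  have htb : TotallyBounded (Set.range U) := by
    rw [Metric.totallyBounded_iff]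
    intro ε hε
    obtain ⟨C, hC, hd⟩ := key (ε/2) (half_pos hε)
    obtain ⟨t, htf, hsub⟩ := Metric.totallyBounded_iff.mp hC.totallyBounded (ε/2) (half_pos hε)
    refine ⟨t, htf, ?_⟩
    rintro _ ⟨n, rfl⟩
    obtain ⟨c, hcC, hdc⟩ := hd n
    obtain ⟨y, hy, hcy⟩ := Set.mem_iUnion₂.mp (hsub hcC)
    refine Set.mem_iUnion₂.mpr ⟨y, hy, ?_⟩
    rw [Metric.mem_ball] at hcy ⊢
    have := dist_triangle (U n) c y
    linarith
  have hcptcl : IsCompact (closure (Set.range U)) :=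
    htb.closure.isCompact_of_isClosed isClosed_closure
  obtain ⟨G, -, ψ, hψ, hG⟩ :=
    hcptcl.tendsto_subseq (fun n => subset_closure (Set.mem_range_self (f := U) n))
  refine ⟨ψ, hψ, ⇑G, ?_⟩
  have heq : ∀ j, eLpNorm (fun t => u (ψ j) t - ⇑G t) p μ
      = ENNReal.ofReal (dist (U (ψ j)) G) := by
    intro j
    have h1 : (fun t => u (ψ j) t - ⇑G t) =ᵐ[μ] ⇑(U (ψ j) - G) := by
      filter_upwards [(hmem (ψ j)).coeFn_toLp, Lp.coeFn_sub (U (ψ j)) G] with t h2 h3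
      rw [h3, Pi.sub_apply, h2]
    rw [eLpNorm_congr_ae h1, dist_eq_norm, Lp.norm_def,
      ENNReal.ofReal_toReal (Lp.eLpNorm_ne_top _)]
  simp only [heq]
  have hdist : Tendsto (fun j => dist (U (ψ j)) G) atTop (𝓝 0) :=
    tendsto_iff_dist_tendsto_zero.mp hG
  have := ENNReal.tendsto_ofReal (f := atTop) hdist
  simpa using this
end

section
/- (Dubinskiĭ's theorem for seminormed sets, case (a).) Let T > 0, let A₀ and A₁ be real Banach spaces with A₀ continuously embedded in A₁, and let M be a seminormed set in A₀ that is compactly embedded in A₀. Let 1 ≤ p ≤ ∞ and 1 < p₁ ≤ ∞. Then Y is compactly embedded in L^p(0,T; A₀): every sequence (u_n) in Y with sup_n [u_n]_Y < ∞ has a subsequence that converges in the norm of L^p(0,T; A₀). -/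
open Filter Topology MeasureTheory
open scoped ENNReal

/-- Totally boundedness of ν-bounded subsets of S. -/
lemma dub_tb {A₀ : Type*} [NormedAddCommGroup A₀]
    (S : Set A₀) (ν : A₀ → ℝ)
    (hcpt : ∀ a : ℕ → A₀, (∀ n, a n ∈ S) → (∃ K : ℝ, ∀ n, ν (a n) ≤ K) →
      ∃ (ψ : ℕ → ℕ) (l : A₀), StrictMono ψ ∧
        Tendsto (fun n => a (ψ n)) atTop (𝓝 l))
    (R : ℝ) : TotallyBounded {φ : A₀ | φ ∈ S ∧ ν φ ≤ R} := by
  have hseq : IsSeqCompact (closure {φ : A₀ | φ ∈ S ∧ ν φ ≤ R}) := by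
    intro x hx
    have hy : ∀ n : ℕ, ∃ y ∈ {φ : A₀ | φ ∈ S ∧ ν φ ≤ R}, dist (x n) y < 1 / (n + 1) := by
      intro n
      exact Metric.mem_closure_iff.1 (hx n) _ (by positivity)
    choose y hyS hyd using hy
    obtain ⟨ψ, l, hψ, hyl⟩ := hcpt y (fun n => (hyS n).1) ⟨R, fun n => (hyS n).2⟩
    refine ⟨l, ?_, ψ, hψ, ?_⟩
    · exact mem_closure_of_tendsto hyl (Eventually.of_forall fun n => hyS (ψ n))
    · refine hyl.congr_dist ?_
      have hb : ∀ n, dist (y (ψ n)) (x (ψ n)) ≤ 1 / (n + 1) := by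
        intro n
        rw [dist_comm]
        refine le_trans (hyd (ψ n)).le ?_
        have h1 : (n : ℝ) ≤ (ψ n : ℝ) := Nat.cast_le.2 hψ.le_apply
        gcongr
      refine squeeze_zero (fun n => dist_nonneg) hb ?_
      simpa using tendsto_one_div_add_atTop_nhds_zero_nat (𝕜 := ℝ)
  exact (hseq.totallyBounded).subset subset_closure

/-- Ehrling-type lemma for seminormed sets. -/
lemma dub_ehrling {A₀ A₁ : Type*} [NormedAddCommGroup A₀] [NormedSpace ℝ A₀]
    [NormedAddCommGroup A₁] [NormedSpace ℝ A₁]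
    (ι : A₀ →L[ℝ] A₁) (hι : Function.Injective ι)
    (S : Set A₀) (ν : A₀ → ℝ)
    (hcone : ∀ φ ∈ S, ∀ c : ℝ, c • φ ∈ S)
    (hν0 : ∀ φ ∈ S, 0 ≤ ν φ)
    (hνeq0 : ∀ φ ∈ S, (ν φ = 0 ↔ φ = 0))
    (hνhom : ∀ φ ∈ S, ∀ c : ℝ, ν (c • φ) = |c| * ν φ)
    (K₀ : ℝ) (hembK : ∀ φ ∈ S, ‖φ‖ ≤ K₀ * ν φ)
    (hcpt : ∀ a : ℕ → A₀, (∀ n, a n ∈ S) → (∃ K : ℝ, ∀ n, ν (a n) ≤ K) →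
      ∃ (ψ : ℕ → ℕ) (l : A₀), StrictMono ψ ∧
        Tendsto (fun n => a (ψ n)) atTop (𝓝 l))
    (ε : ℝ) (hε : 0 < ε) :
    ∃ Cε : ℝ, 0 < Cε ∧ ∀ φ ∈ S, ∀ φ' ∈ S,
      ‖φ - φ'‖ ≤ ε * (ν φ + ν φ') + Cε * ‖ι φ - ι φ'‖ := by
  by_contra hcon
  push_neg at hcon
  have hex : ∀ k : ℕ, ∃ φ ∈ S, ∃ φ' ∈ S,
      ε * (ν φ + ν φ') + (k + 1) * ‖ι φ - ι φ'‖ < ‖φ - φ'‖ := by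
    intro k
    obtain ⟨φ, hφ, φ', hφ', hlt⟩ := hcon (k + 1) (by positivity)
    exact ⟨φ, hφ, φ', hφ', hlt⟩
  choose φ hφS φ' hφ'S hlt using hex
  set s : ℕ → ℝ := fun k => ν (φ k) + ν (φ' k) with hs_def
  have hspos : ∀ k, 0 < s k := by
    intro k
    rcases lt_or_eq_of_le (add_nonneg (hν0 _ (hφS k)) (hν0 _ (hφ'S k))) with h | h
    · exact h
    replace h : ν (φ k) + ν (φ' k) = 0 := h.symm
    have h1 : ν (φ k) = 0 :=
      le_antisymm (by linarith [hν0 _ (hφS k), hν0 _ (hφ'S k)]) (hν0 _ (hφS k))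
    have h2 : ν (φ' k) = 0 :=
      le_antisymm (by linarith [hν0 _ (hφS k), hν0 _ (hφ'S k)]) (hν0 _ (hφ'S k))
    have e1 : φ k = 0 := (hνeq0 _ (hφS k)).1 h1
    have e2 : φ' k = 0 := (hνeq0 _ (hφ'S k)).1 h2
    have := hlt k
    rw [e1, e2] at this
    rw [e1] at h1
    simp [h1] at this
  set a : ℕ → A₀ := fun k => (s k)⁻¹ • φ k with ha_def
  set b : ℕ → A₀ := fun k => (s k)⁻¹ • φ' k with hb_def
  have haS : ∀ k, a k ∈ S := fun k => hcone _ (hφS k) _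
  have hbS : ∀ k, b k ∈ S := fun k => hcone _ (hφ'S k) _
  have hνa : ∀ k, ν (a k) = (s k)⁻¹ * ν (φ k) := by
    intro k
    rw [ha_def]
    simp only []
    rw [hνhom _ (hφS k), abs_of_nonneg (inv_nonneg.2 (hspos k).le)]
  have hνb : ∀ k, ν (b k) = (s k)⁻¹ * ν (φ' k) := by
    intro k
    rw [hb_def]
    simp only []
    rw [hνhom _ (hφ'S k), abs_of_nonneg (inv_nonneg.2 (hspos k).le)]
  have hνab : ∀ k, ν (a k) + ν (b k) = 1 := by
    intro k
    rw [hνa k, hνb k, ← mul_add, inv_mul_cancel₀ (hspos k).ne']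
  have hab : ∀ k, a k - b k = (s k)⁻¹ • (φ k - φ' k) := by
    intro k; rw [ha_def, hb_def]; simp [smul_sub]
  have hscaled : ∀ k, ε + (k + 1) * ‖ι (a k) - ι (b k)‖ < ‖a k - b k‖ := by
    intro k
    have h1 := mul_lt_mul_of_pos_left (hlt k) (inv_pos.2 (hspos k))
    have e1 : ‖a k - b k‖ = (s k)⁻¹ * ‖φ k - φ' k‖ := by
      rw [hab k, norm_smul, Real.norm_eq_abs, abs_of_nonneg (inv_nonneg.2 (hspos k).le)]
    have e2 : ‖ι (a k) - ι (b k)‖ = (s k)⁻¹ * ‖ι (φ k) - ι (φ' k)‖ := by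
      have : ι (a k) - ι (b k) = (s k)⁻¹ • (ι (φ k) - ι (φ' k)) := by
        rw [ha_def, hb_def]
        simp only [ContinuousLinearMap.map_smul, smul_sub]
      rw [this, norm_smul, Real.norm_eq_abs, abs_of_nonneg (inv_nonneg.2 (hspos k).le)]
    rw [e1, e2]
    calc ε + (k + 1) * ((s k)⁻¹ * ‖ι (φ k) - ι (φ' k)‖)
        = (s k)⁻¹ * (ε * s k + (k + 1) * ‖ι (φ k) - ι (φ' k)‖) := by
          have hsk : s k = ν (φ k) + ν (φ' k) := rfl
          have hne : s k ≠ 0 := (hspos k).ne'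
          field_simp
          try ring
      _ < (s k)⁻¹ * ‖φ k - φ' k‖ := by
          refine mul_lt_mul_of_pos_left ?_ (inv_pos.2 (hspos k))
          simpa [hs_def] using hlt k
  have hbd : ∀ k, ‖a k - b k‖ ≤ K₀ * 1 := by
    intro k
    calc ‖a k - b k‖ ≤ ‖a k‖ + ‖b k‖ := norm_sub_le _ _
      _ ≤ K₀ * ν (a k) + K₀ * ν (b k) := add_le_add (hembK _ (haS k)) (hembK _ (hbS k))
      _ = K₀ * 1 := by rw [← mul_add, hνab k]
  obtain ⟨ψ₁, la, hψ₁, hla⟩ := hcpt a haS ⟨1, fun k => by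
    have := hν0 _ (hbS k); linarith [hνab k]⟩
  obtain ⟨ψ₂, lb, hψ₂, hlb⟩ := hcpt (fun k => b (ψ₁ k)) (fun k => hbS _) ⟨1, fun k => by
    have := hν0 _ (haS (ψ₁ k)); linarith [hνab (ψ₁ k)]⟩
  set σ : ℕ → ℕ := fun k => ψ₁ (ψ₂ k) with hσ_def
  have hσ : StrictMono σ := hψ₁.comp hψ₂
  have hla' : Tendsto (fun k => a (σ k)) atTop (𝓝 la) := hla.comp hψ₂.tendsto_atTop
  have hlb' : Tendsto (fun k => b (σ k)) atTop (𝓝 lb) := hlb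
  -- ι (a k) - ι (b k) tends to 0
  have hι0 : Tendsto (fun k => ‖ι (a (σ k)) - ι (b (σ k))‖) atTop (𝓝 0) := by
    have hsq : ∀ k : ℕ, ‖ι (a (σ k)) - ι (b (σ k))‖ ≤ K₀ / (k + 1) := by
      intro k
      have h1 := hscaled (σ k)
      have h2 := hbd (σ k)
      have h3 : ((σ k : ℝ) + 1) * ‖ι (a (σ k)) - ι (b (σ k))‖ ≤ K₀ := by
        nlinarith [hε]
      have h4 : ((k : ℝ) + 1) * ‖ι (a (σ k)) - ι (b (σ k))‖ ≤ K₀ := by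
        have hk1 : (k : ℝ) + 1 ≤ (σ k : ℝ) + 1 := by
          have : (k : ℝ) ≤ σ k := Nat.cast_le.2 (hσ.le_apply)
          linarith
        nlinarith [norm_nonneg (ι (a (σ k)) - ι (b (σ k)))]
      rw [le_div_iff₀ (by positivity : (0:ℝ) < (k:ℝ) + 1)]
      linarith [h4]
    refine squeeze_zero (fun k => norm_nonneg _) hsq ?_
    have := tendsto_one_div_add_atTop_nhds_zero_nat (𝕜 := ℝ)
    have h2 : Tendsto (fun n : ℕ => K₀ * (1 / ((n : ℝ) + 1))) atTop (𝓝 (K₀ * 0)) :=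
      this.const_mul K₀
    simpa [div_eq_mul_inv, mul_comm] using h2
  have hlab : la = lb := by
    apply hι
    have h1 : Tendsto (fun k => ι (a (σ k)) - ι (b (σ k))) atTop (𝓝 (ι la - ι lb)) :=
      ((ι.continuous.tendsto la).comp hla').sub ((ι.continuous.tendsto lb).comp hlb')
    have h2 : Tendsto (fun k => ι (a (σ k)) - ι (b (σ k))) atTop (𝓝 0) :=
      tendsto_zero_iff_norm_tendsto_zero.2 hι0
    have h3 := tendsto_nhds_unique h1 h2
    rwa [sub_eq_zero] at h3
  have hnorm : Tendsto (fun k => ‖a (σ k) - b (σ k)‖) atTop (𝓝 ‖la - lb‖) :=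
    (hla'.sub hlb').norm
  have hεle : ε ≤ ‖la - lb‖ := by
    refine ge_of_tendsto hnorm (Eventually.of_forall fun k => ?_)
    have h1 := hscaled (σ k)
    nlinarith [norm_nonneg (ι (a (σ k)) - ι (b (σ k))), (Nat.cast_nonneg (σ k) : (0:ℝ) ≤ σ k)]
  rw [hlab, sub_self, norm_zero] at hεle
  linarith



set_option maxHeartbeats 2000000

/-- Dubinskiĭ's theorem, case (a): A₀ ↪ A₁ Banach spaces, M a seminormed set (in the
sense of Dubinskiĭ) compactly embedded in A₀, 1 ≤ p ≤ ∞, 1 < p₁ ≤ ∞. Then Y is compactly embedded in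
L^p(0,T;A₀): every [·]_Y-bounded sequence has a subsequence converging in L^p(0,T;A₀). -/
theorem stmt10
    {A₀ A₁ : Type*} [NormedAddCommGroup A₀] [NormedSpace ℝ A₀] [CompleteSpace A₀]
    [NormedAddCommGroup A₁] [NormedSpace ℝ A₁] [CompleteSpace A₁]
    -- A₀ is continuously embedded in A₁ via the injective linear map `ι`
    (ι : A₀ →ₗ[ℝ] A₁) (hι : Function.Injective ι)
    (C : ℝ) (hC : 0 < C) (hιC : ∀ a : A₀, ‖ι a‖ ≤ C * ‖a‖)
    (T : ℝ) (hT : 0 < T)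
    -- M = S is a seminormed set in A₀ with seminorm ν
    (S : Set A₀) (ν : A₀ → ℝ)
    (hcone : ∀ φ ∈ S, ∀ c : ℝ, c • φ ∈ S)
    (hν0 : ∀ φ ∈ S, 0 ≤ ν φ)
    (hνeq0 : ∀ φ ∈ S, (ν φ = 0 ↔ φ = 0))
    (hνhom : ∀ φ ∈ S, ∀ c : ℝ, ν (c • φ) = |c| * ν φ)
    -- M is embedded in A₀
    (hemb : ∃ K₀ > (0 : ℝ), ∀ φ ∈ S, ‖φ‖ ≤ K₀ * ν φ)
    -- the embedding of M in A₀ is compact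
    (hcpt : ∀ a : ℕ → A₀, (∀ n, a n ∈ S) → (∃ K : ℝ, ∀ n, ν (a n) ≤ K) →
      ∃ (ψ : ℕ → ℕ) (l : A₀), StrictMono ψ ∧
        Tendsto (fun n => a (ψ n)) atTop (𝓝 l))
    -- 1 ≤ p ≤ ∞ and 1 < p₁ ≤ ∞
    (p p₁ : ℝ≥0∞) (hp : 1 ≤ p) (hp₁ : 1 < p₁)
    -- (u_n) is a sequence in Y, with derivatives (w_n) taking values in A₁
    (u : ℕ → ℝ → A₀) (w : ℕ → ℝ → A₁)
    (huS : ∀ n, ∀ t ∈ Set.Icc (0 : ℝ) T, u n t ∈ S)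
    (humeas : ∀ n, AEStronglyMeasurable (u n) (volume.restrict (Set.Ioc (0 : ℝ) T)))
    (hνmeas : ∀ n, AEMeasurable (fun t => ν (u n t)) (volume.restrict (Set.Ioc (0 : ℝ) T)))
    (hwint : ∀ n, IntegrableOn (w n) (Set.Ioc (0 : ℝ) T))
    (hrep : ∀ n, ∀ᵐ t ∂volume.restrict (Set.Icc (0 : ℝ) T),
      ι (u n t) = ι (u n 0) + ∫ s in (0 : ℝ)..t, w n s)
    -- the sequence is bounded in Y₊: sup_n [u_n]_Y < ∞
    (K : ℝ)
    (hbound : ∀ n,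
      eLpNorm (fun t => ν (u n t)) p (volume.restrict (Set.Ioc (0 : ℝ) T))
        + eLpNorm (w n) p₁ (volume.restrict (Set.Ioc (0 : ℝ) T)) ≤ ENNReal.ofReal K) :
    ∃ ψ : ℕ → ℕ, StrictMono ψ ∧
      ∃ g : ℝ → A₀,
        Tendsto
          (fun j => eLpNorm (fun t => u (ψ j) t - g t) p (volume.restrict (Set.Ioc (0 : ℝ) T)))
          atTop (𝓝 0) := by
  classical
  obtain ⟨K₀, hK₀, hembK⟩ := hemb
  set μ := volume.restrict (Set.Ioc (0 : ℝ) T) with hμ_def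
  set Kr := max K 0 with hKr_def
  have hKr0 : 0 ≤ Kr := le_max_right _ _
  have hKKr : ENNReal.ofReal K ≤ ENNReal.ofReal Kr := ENNReal.ofReal_le_ofReal (le_max_left _ _)
  have hνK : ∀ n, eLpNorm (fun t => ν (u n t)) p μ ≤ ENNReal.ofReal Kr :=
    fun n => le_trans (le_trans le_self_add (hbound n)) hKKr
  have hwK : ∀ n, eLpNorm (w n) p₁ μ ≤ ENNReal.ofReal Kr :=
    fun n => le_trans (le_trans le_add_self (hbound n)) hKKr
  set v : ℕ → ℝ → A₁ := fun n t => ι (u n 0) + ∫ s in (0 : ℝ)..t, w n s with hv_def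
  have hwmeas : ∀ n, AEStronglyMeasurable (w n) μ := fun n => (hwint n).aestronglyMeasurable
  have hii : ∀ n (s t : ℝ), s ∈ Set.Icc (0:ℝ) T → t ∈ Set.Icc (0:ℝ) T →
      IntervalIntegrable (w n) volume s t := by
    intro n s t hs ht
    rw [intervalIntegrable_iff]
    refine (hwint n).mono_set ?_
    rw [Set.uIoc]
    exact Set.Ioc_subset_Ioc (le_min hs.1 ht.1) (max_le hs.2 ht.2)
  have hvdiff : ∀ n (s t : ℝ), s ∈ Set.Icc (0:ℝ) T → t ∈ Set.Icc (0:ℝ) T →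
      v n t - v n s = ∫ x in s..t, w n x := by
    intro n s t hs ht
    have h0T : (0:ℝ) ∈ Set.Icc (0:ℝ) T := ⟨le_refl 0, hT.le⟩
    have hadd := intervalIntegral.integral_add_adjacent_intervals
      (hii n 0 s h0T hs) (hii n s t hs ht)
    simp only [hv_def]
    rw [← hadd]
    abel
  -- Hölder exponent
  set α : ℝ := 1 - 1 / p₁.toReal with hα_def
  have hα : 0 < α := by
    rcases eq_or_ne p₁ ∞ with h | h
    · simp [hα_def, h]
    · have h1 : 1 < p₁.toReal := by
        rw [← ENNReal.toReal_one]
        exact ENNReal.toReal_lt_toReal (by simp) h |>.2 hp₁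
      have : 1 / p₁.toReal < 1 := by
        rw [div_lt_one (by linarith)]; linarith
      rw [hα_def]; linarith
  have h_holder : ∀ n (s t : ℝ), 0 ≤ s → s ≤ t → t ≤ T →
      ‖∫ x in s..t, w n x‖ ≤ Kr * (t - s) ^ α := by
    intro n s t hs hst ht
    have hsub : Set.Ioc s t ⊆ Set.Ioc (0:ℝ) T := Set.Ioc_subset_Ioc hs ht
    set μst := volume.restrict (Set.Ioc s t) with hμst_def
    have hwm : AEStronglyMeasurable (w n) μst :=
      (hwmeas n).mono_measure (Measure.restrict_mono hsub le_rfl)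
    have h1 : ‖∫ x in s..t, w n x‖ ≤ (∫⁻ x, (‖w n x‖₊ : ℝ≥0∞) ∂μst).toReal := by
      rw [intervalIntegral.integral_of_le hst]
      refine (norm_integral_le_lintegral_norm _).trans_eq ?_
      congr 1
      refine lintegral_congr fun x => ?_
      rw [ofReal_norm, enorm_eq_nnnorm]
    have h2 : (∫⁻ x, (‖w n x‖₊ : ℝ≥0∞) ∂μst) = eLpNorm (w n) 1 μst :=
      by rw [eLpNorm_one_eq_lintegral_enorm]; rfl
    have h3 : eLpNorm (w n) 1 μst ≤ eLpNorm (w n) p₁ μst *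
        (μst Set.univ) ^ (1 / (1:ℝ≥0∞).toReal - 1 / p₁.toReal) :=
      eLpNorm_le_eLpNorm_mul_rpow_measure_univ hp₁.le hwm
    have h4 : eLpNorm (w n) p₁ μst ≤ ENNReal.ofReal Kr :=
      le_trans (eLpNorm_mono_measure _ (Measure.restrict_mono hsub le_rfl)) (hwK n)
    have h5 : μst Set.univ = ENNReal.ofReal (t - s) := by
      rw [hμst_def, Measure.restrict_apply_univ, Real.volume_Ioc]
    have h6 : (1 / (1:ℝ≥0∞).toReal - 1 / p₁.toReal) = α := by
      rw [hα_def]; norm_num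
    have h7 : eLpNorm (w n) 1 μst ≤ ENNReal.ofReal (Kr * (t - s) ^ α) := by
      refine h3.trans ?_
      rw [h5, h6, ENNReal.ofReal_mul hKr0]
      exact mul_le_mul h4 (le_of_eq (ENNReal.ofReal_rpow_of_nonneg (by linarith : (0:ℝ) ≤ t - s) hα.le))
        zero_le zero_le
    refine h1.trans ?_
    refine ENNReal.toReal_le_of_le_ofReal (mul_nonneg hKr0 (Real.rpow_nonneg (by linarith) _)) ?_
    rw [← h2] at h7
    exact h7
  have hmod : ∀ n (s t : ℝ), s ∈ Set.Icc (0:ℝ) T → t ∈ Set.Icc (0:ℝ) T →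
      ‖v n t - v n s‖ ≤ Kr * |t - s| ^ α := by
    intro n s t hs ht
    rcases le_total s t with hst | hst
    · rw [hvdiff n s t hs ht, abs_of_nonneg (by linarith)]
      exact h_holder n s t hs.1 hst ht.2
    · rw [norm_sub_rev, hvdiff n t s ht hs, abs_of_nonpos (by linarith)]
      have := h_holder n t s ht.1 hst hs.2
      simpa using this
  have hsmall : ∀ ε : ℝ, 0 < ε → ∃ δ : ℝ, 0 < δ ∧ ∀ n (s t : ℝ),
      s ∈ Set.Icc (0:ℝ) T → t ∈ Set.Icc (0:ℝ) T → |t - s| ≤ δ → ‖v n t - v n s‖ ≤ ε := by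
    intro ε hε
    refine ⟨(ε / (Kr + 1)) ^ α⁻¹, by positivity, ?_⟩
    intro n s t hs ht hd
    refine (hmod n s t hs ht).trans ?_
    have h1 : |t - s| ^ α ≤ ((ε / (Kr + 1)) ^ α⁻¹) ^ α :=
      Real.rpow_le_rpow (abs_nonneg _) hd hα.le
    have h2 : ((ε / (Kr + 1)) ^ α⁻¹) ^ α = ε / (Kr + 1) := by
      rw [← Real.rpow_mul (by positivity), inv_mul_cancel₀ hα.ne', Real.rpow_one]
    rw [h2] at h1
    have h3 : Kr * |t - s| ^ α ≤ Kr * (ε / (Kr + 1)) :=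
      mul_le_mul_of_nonneg_left h1 hKr0
    refine h3.trans ?_
    rw [mul_div_assoc'] -- Kr * ε / (Kr+1)
    rw [div_le_iff₀ (by positivity)]
    nlinarith
  have hvcont : ∀ n, ContinuousOn (v n) (Set.Icc (0:ℝ) T) := by
    intro n
    refine Metric.continuousOn_iff.2 fun b hb ε hε => ?_
    obtain ⟨δ, hδ, hδ2⟩ := hsmall (ε / 2) (by positivity)
    refine ⟨δ, hδ, fun a ha hab => ?_⟩
    have := hδ2 n b a hb ha (by rw [Real.dist_eq] at hab; exact (abs_sub_comm a b ▸ hab.le))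
    calc dist (v n a) (v n b) = ‖v n a - v n b‖ := dist_eq_norm _ _
      _ ≤ ε / 2 := this
      _ < ε := by linarith
  have hGn : ∀ n, ∀ᵐ t ∂μ, ι (u n t) = v n t := by
    intro n
    have hle : μ ≤ volume.restrict (Set.Icc (0:ℝ) T) :=
      Measure.restrict_mono Set.Ioc_subset_Icc_self le_rfl
    exact (hrep n).filter_mono (ae_mono hle)
  have hGall : ∀ᵐ t ∂μ, ∀ n, ι (u n t) = v n t := ae_all_iff.2 hGn
  set G : Set ℝ := {t | t ∈ Set.Ioc (0:ℝ) T ∧ ∀ n, ι (u n t) = v n t} with hG_def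
  have hGnull : volume ((Set.Ioc (0:ℝ) T) \ G) = 0 := by
    have h2 : μ {t | ¬ ∀ n, ι (u n t) = v n t} = 0 := hGall
    rw [hμ_def, Measure.restrict_apply_eq_zero' measurableSet_Ioc] at h2
    refine measure_mono_null ?_ h2
    intro t ht
    exact ⟨fun hP => ht.2 ⟨ht.1, hP⟩, ht.1⟩
  -- Chebyshev
  have hcheb : ∀ δ : ℝ, 0 < δ → ∃ R : ℝ, 0 < R ∧ ∀ n,
      μ {t | R < ν (u n t)} < ENNReal.ofReal δ := by
    intro δ hδ
    by_cases hptop : p = ∞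
    · refine ⟨Kr + 1, by positivity, fun n => ?_⟩
      have h := hνK n
      rw [hptop, eLpNorm_exponent_top] at h
      have hae : ∀ᵐ t ∂μ, (‖ν (u n t)‖₊ : ℝ≥0∞) ≤ ENNReal.ofReal Kr :=
        ae_le_eLpNormEssSup.mono fun t ht => ht.trans h
      have h0 : μ {t | Kr + 1 < ν (u n t)} = 0 := by
        have hnull : μ {t | ¬ ((‖ν (u n t)‖₊ : ℝ≥0∞) ≤ ENNReal.ofReal Kr)} = 0 := hae
        refine measure_mono_null ?_ hnull
        intro t ht
        simp only [Set.mem_setOf_eq, not_le]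
        have h1 : ENNReal.ofReal (Kr + 1) ≤ (‖ν (u n t)‖₊ : ℝ≥0∞) := by
          rw [← enorm_eq_nnnorm, ← ofReal_norm]
          exact ENNReal.ofReal_le_ofReal ((le_abs_self _).trans' ht.le)
        have h2 : ENNReal.ofReal Kr < ENNReal.ofReal (Kr + 1) :=
          ENNReal.ofReal_lt_ofReal_iff (by positivity) |>.2 (by linarith)
        exact lt_of_lt_of_le h2 h1
      rw [h0]
      exact ENNReal.ofReal_pos.2 hδ
    · have hp0 : p ≠ 0 := (lt_of_lt_of_le zero_lt_one hp).ne'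
      have hpt1 : 1 ≤ p.toReal := by
        rw [← ENNReal.toReal_one]
        exact (ENNReal.toReal_le_toReal (by simp) hptop).2 hp
      set x : ℝ := min (δ / 2) 1 with hx_def
      have hx0 : 0 < x := lt_min (by positivity) one_pos
      have hx1 : x ≤ 1 := min_le_right _ _
      set R : ℝ := (Kr + 1) / x with hR_def
      have hR0 : 0 < R := by positivity
      refine ⟨R, hR0, fun n => ?_⟩
      have hch := meas_ge_le_mul_pow_eLpNorm_enorm μ hp0 hptop
        (hνmeas n).aestronglyMeasurable (ε := ENNReal.ofReal R)
        (by exact (ENNReal.ofReal_pos.2 hR0).ne')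
      have hsubset : {t | R < ν (u n t)} ⊆ {t | ENNReal.ofReal R ≤ (‖ν (u n t)‖₊ : ℝ≥0∞)} := by
        intro t ht
        rw [Set.mem_setOf_eq, ← enorm_eq_nnnorm, ← ofReal_norm]
        exact ENNReal.ofReal_le_ofReal ((le_abs_self _).trans' ht.le)
      have hKrR : Kr / R ≤ x := by
        rw [hR_def, div_div_eq_mul_div, div_le_iff₀ (by positivity)]
        nlinarith
      have hrhs : (ENNReal.ofReal R)⁻¹ ^ p.toReal * eLpNorm (fun t => ν (u n t)) p μ ^ p.toReal
          ≤ ENNReal.ofReal ((Kr / R) ^ p.toReal) := by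
        calc (ENNReal.ofReal R)⁻¹ ^ p.toReal * eLpNorm (fun t => ν (u n t)) p μ ^ p.toReal
            ≤ (ENNReal.ofReal R)⁻¹ ^ p.toReal * (ENNReal.ofReal Kr) ^ p.toReal := by
              gcongr
              exact hνK n
          _ = ((ENNReal.ofReal R)⁻¹ * ENNReal.ofReal Kr) ^ p.toReal := by
              rw [ENNReal.mul_rpow_of_nonneg _ _ (by linarith)]
          _ = (ENNReal.ofReal (Kr / R)) ^ p.toReal := by
              congr 1
              rw [← ENNReal.ofReal_inv_of_pos hR0, ← ENNReal.ofReal_mul (by positivity)]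
              congr 1
              rw [div_eq_mul_inv, mul_comm]
          _ = ENNReal.ofReal ((Kr / R) ^ p.toReal) := by
              rw [ENNReal.ofReal_rpow_of_nonneg (by positivity) (by linarith)]
      have hfin : (Kr / R) ^ p.toReal < δ := by
        have hKR0 : 0 ≤ Kr / R := by positivity
        have h1 : (Kr / R) ^ p.toReal ≤ Kr / R := by
          rcases eq_or_lt_of_le hKR0 with h | h
          · rw [← h, Real.zero_rpow (by linarith)]
          · calc (Kr / R) ^ p.toReal ≤ (Kr / R) ^ (1:ℝ) :=
                Real.rpow_le_rpow_of_exponent_ge h (hKrR.trans hx1) hpt1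
              _ = Kr / R := Real.rpow_one _
        have : Kr / R ≤ δ / 2 := hKrR.trans (min_le_left _ _)
        linarith
      calc μ {t | R < ν (u n t)} ≤ μ {t | ENNReal.ofReal R ≤ (‖ν (u n t)‖₊ : ℝ≥0∞)} :=
            measure_mono hsubset
        _ ≤ (ENNReal.ofReal R)⁻¹ ^ p.toReal * eLpNorm (fun t => ν (u n t)) p μ ^ p.toReal := by exact hch (fun h => absurd h ENNReal.ofReal_ne_top)
        _ ≤ ENNReal.ofReal ((Kr / R) ^ p.toReal) := hrhs
        _ < ENNReal.ofReal δ := ENNReal.ofReal_lt_ofReal_iff hδ |>.2 hfin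
  set ι' : A₀ →L[ℝ] A₁ := LinearMap.mkContinuous ι C hιC with hι'_def
  have hι'coe : ∀ x : A₀, ι' x = ι x := fun x => rfl
  -- selection of good times
  have hsel : ∀ (n : ℕ) (a b R : ℝ), 0 ≤ a → b ≤ T → a < b →
      μ {t | R < ν (u n t)} < ENNReal.ofReal (b - a) →
      ∃ τ, τ ∈ Set.Ioc a b ∧ ν (u n τ) ≤ R ∧ τ ∈ G := by
    intro n a b R ha hb hab hmeas
    by_contra hno
    push_neg at hno
    have hsub : Set.Ioc a b ⊆ {t | R < ν (u n t)} ∪ (Set.Ioc (0:ℝ) T \ G) := by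
      intro τ hτ
      have hτ' : τ ∈ Set.Ioc (0:ℝ) T := ⟨lt_of_le_of_lt ha hτ.1, hτ.2.trans hb⟩
      by_cases hG : τ ∈ G
      · left
        exact lt_of_not_ge fun hR => (hno τ hτ hR) hG
      · right
        exact ⟨hτ', hG⟩
    have hμ1 : μ (Set.Ioc a b) = ENNReal.ofReal (b - a) := by
      rw [hμ_def, Measure.restrict_apply measurableSet_Ioc,
        Set.inter_eq_self_of_subset_left (Set.Ioc_subset_Ioc ha hb), Real.volume_Ioc]
    have hμ2 : μ (Set.Ioc (0:ℝ) T \ G) = 0 :=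
      le_antisymm (le_trans (Measure.le_iff'.1 Measure.restrict_le_self _) hGnull.le) zero_le
    have hcontr : μ (Set.Ioc a b) ≤ μ {t | R < ν (u n t)} + μ (Set.Ioc (0:ℝ) T \ G) :=
      le_trans (measure_mono hsub) (measure_union_le _ _)
    rw [hμ1, hμ2, add_zero] at hcontr
    exact absurd hmeas (not_lt.2 hcontr)
  -- total boundedness of the full range of the v n
  have hVTB : TotallyBounded {x : A₁ | ∃ n, ∃ t ∈ Set.Icc (0:ℝ) T, x = v n t} := by
    rw [Metric.totallyBounded_iff]
    intro ε hε
    obtain ⟨δ, hδ0, hδ⟩ := hsmall (ε/4) (by positivity)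
    set lam := min δ T with hlam_def
    have hlam0 : 0 < lam := lt_min hδ0 hT
    have hlamδ : lam ≤ δ := min_le_left _ _
    have hlamT : lam ≤ T := min_le_right _ _
    obtain ⟨R, hR0, hRn⟩ := hcheb lam hlam0
    have hTB0 : TotallyBounded (⇑ι' '' {φ : A₀ | φ ∈ S ∧ ν φ ≤ R}) :=
      (dub_tb S ν hcpt R).image ι'.uniformContinuous
    rw [Metric.totallyBounded_iff] at hTB0
    obtain ⟨Z, hZfin, hZ⟩ := hTB0 (ε/4) (by positivity)
    refine ⟨Z, hZfin, ?_⟩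
    rintro x ⟨n, t, ht, rfl⟩
    set b := max t lam with hb_def
    have hblam : b - lam ≥ 0 := by
      have := le_max_right t lam; simp only [hb_def]; linarith
    have hbT : b ≤ T := max_le ht.2 hlamT
    obtain ⟨τ, hτmem, hτν, hτG⟩ := hsel n (b - lam) b R hblam hbT (by linarith)
      (by rw [show b - (b - lam) = lam by ring]; exact hRn n)
    have hτIoc : τ ∈ Set.Ioc (0:ℝ) T := hτG.1
    have hτIcc : τ ∈ Set.Icc (0:ℝ) T := ⟨hτIoc.1.le, hτIoc.2⟩
    have htb : t ≤ b := le_max_left _ _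
    have htb2 : b - lam ≤ t := by
      have h1 : b ≤ t + lam := max_le (by linarith) (by linarith [ht.1])
      linarith
    have habs : |t - τ| ≤ δ := by
      rw [abs_le]
      constructor
      · linarith [hτmem.2]
      · linarith [hτmem.1]
    have hdist : ‖v n t - v n τ‖ ≤ ε/4 := hδ n τ t hτIcc ht habs
    have hmem : ι' (u n τ) ∈ ⇑ι' '' {φ : A₀ | φ ∈ S ∧ ν φ ≤ R} :=
      ⟨u n τ, ⟨huS n τ hτIcc, hτν⟩, rfl⟩
    obtain ⟨y, hyZ, hyb⟩ := Set.mem_iUnion₂.1 (hZ hmem)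
    refine Set.mem_iUnion₂.2 ⟨y, hyZ, ?_⟩
    have hvτ : v n τ = ι' (u n τ) := by rw [hι'coe]; exact (hτG.2 n).symm
    rw [Metric.mem_ball] at hyb ⊢
    calc dist (v n t) y
        ≤ dist (v n t) (v n τ) + dist (v n τ) y := dist_triangle _ _ _
      _ ≤ ε/4 + dist (v n τ) y := by
          rw [dist_eq_norm]; exact add_le_add_left hdist _
      _ < ε/4 + ε/4 := by rw [hvτ]; exact add_lt_add_right hyb _
      _ < ε := by linarith
  set V := {x : A₁ | ∃ n, ∃ t ∈ Set.Icc (0:ℝ) T, x = v n t} with hV_def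
  set B := closure V with hB_def
  have hBcpt : IsCompact B := hVTB.closure.isCompact_of_isClosed isClosed_closure
  set θ : ℚ → ℝ := fun q => min (max (q : ℝ) 0) T with hθ_def
  have hθmem : ∀ q, θ q ∈ Set.Icc (0:ℝ) T :=
    fun q => ⟨le_min (le_max_right _ _) hT.le, min_le_right _ _⟩
  have hnet : ∀ δ : ℝ, 0 < δ → ∃ F : Finset ℚ, ∀ t ∈ Set.Icc (0:ℝ) T,
      ∃ q ∈ F, |t - θ q| ≤ δ := by
    intro δ hδ
    obtain ⟨d, hd0, hdδ⟩ : ∃ d : ℚ, 0 < (d:ℝ) ∧ (d:ℝ) ≤ δ := by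
      obtain ⟨q, hq1, hq2⟩ := exists_rat_btwn hδ
      exact ⟨q, hq1, hq2.le⟩
    set N := Nat.ceil (T / (d:ℝ)) with hN_def
    refine ⟨Finset.image (fun j : ℕ => (j : ℚ) * d) (Finset.range (N+1)), ?_⟩
    intro t ht
    set j := Nat.floor (t / (d:ℝ)) with hj_def
    have hjN : j ≤ N := by
      rw [hj_def, hN_def]
      exact le_trans (Nat.floor_le_floor (by gcongr; exact ht.2)) (Nat.floor_le_ceil _)
    refine ⟨(j:ℚ) * d, Finset.mem_image_of_mem (fun j : ℕ => (j : ℚ) * d) (Finset.mem_range.2 (Nat.lt_succ_of_le hjN)), ?_⟩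
    have h1 : (j:ℝ) * d ≤ t := by
      have h := Nat.floor_le (div_nonneg ht.1 hd0.le)
      calc (j:ℝ)*d ≤ (t/d)*d := mul_le_mul_of_nonneg_right h hd0.le
        _ = t := div_mul_cancel₀ _ hd0.ne'
    have h2 : t < ((j:ℝ)+1) * d := by
      have h := Nat.lt_floor_add_one (t/(d:ℝ))
      calc t = (t/d)*d := (div_mul_cancel₀ _ hd0.ne').symm
        _ < ((j:ℝ)+1)*d := by
          rw [hj_def]
          exact mul_lt_mul_of_pos_right h hd0
    have hθeq : θ ((j:ℚ)*d) = (j:ℝ)*d := by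
      rw [hθ_def]
      simp only [Rat.cast_mul, Rat.cast_natCast]
      rw [max_eq_left (by positivity), min_eq_left (by linarith [ht.2])]
    rw [hθeq, abs_le]
    constructor
    · nlinarith [hd0, hdδ, h1, h2]
    · nlinarith [hd0, hdδ, h1, h2]
  have hvB : ∀ n q, v n (θ q) ∈ B := fun n q => subset_closure ⟨n, θ q, hθmem q, rfl⟩
  haveI : CompactSpace B := isCompact_iff_compactSpace.1 hBcpt
  set Fq : ℕ → (ℚ → B) := fun n q => ⟨v n (θ q), hvB n q⟩ with hF_def
  obtain ⟨L, -, σ, hσmono, hσconv⟩ :=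
    (isCompact_univ (X := ℚ → B)).tendsto_subseq (fun n => Set.mem_univ (Fq n))
  have hqconv : ∀ q : ℚ, Tendsto (fun k => v (σ k) (θ q)) atTop (𝓝 (L q : A₁)) := by
    intro q
    have h1 : Tendsto (fun k => Fq (σ k) q) atTop (𝓝 (L q)) :=
      ((continuous_apply q).tendsto L).comp hσconv
    exact ((continuous_subtype_val.tendsto _).comp h1)
  have hUC : ∀ ε : ℝ, 0 < ε → ∃ N, ∀ k l, N ≤ k → N ≤ l → ∀ t ∈ Set.Icc (0:ℝ) T,
      ‖v (σ k) t - v (σ l) t‖ ≤ ε := by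
    intro ε hε
    obtain ⟨δ, hδ0, hδ⟩ := hsmall (ε/3) (by positivity)
    obtain ⟨F', hF'⟩ := hnet δ hδ0
    have hca : ∀ q : ℚ, ∃ N, ∀ k l, N ≤ k → N ≤ l →
        ‖v (σ k) (θ q) - v (σ l) (θ q)‖ ≤ ε/3 := by
      intro q
      have hc : CauchySeq (fun k => v (σ k) (θ q)) := (hqconv q).cauchySeq
      obtain ⟨N, hN⟩ := Metric.cauchySeq_iff.1 hc (ε/3) (by positivity)
      refine ⟨N, fun k l hk hl => ?_⟩
      have := hN k hk l hl
      rw [dist_eq_norm] at this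
      exact this.le
    choose Nq hNq using hca
    refine ⟨F'.sup Nq, fun k l hk hl t ht => ?_⟩
    obtain ⟨q, hqF, hqd⟩ := hF' t ht
    have hNk : Nq q ≤ k := le_trans (Finset.le_sup hqF) hk
    have hNl : Nq q ≤ l := le_trans (Finset.le_sup hqF) hl
    have h1 : ‖v (σ k) t - v (σ k) (θ q)‖ ≤ ε/3 := hδ (σ k) (θ q) t (hθmem q) ht hqd
    have h2 : ‖v (σ l) t - v (σ l) (θ q)‖ ≤ ε/3 := hδ (σ l) (θ q) t (hθmem q) ht hqd
    have h3 := hNq q k l hNk hNl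
    calc ‖v (σ k) t - v (σ l) t‖
        = ‖(v (σ k) t - v (σ k) (θ q)) + (v (σ k) (θ q) - v (σ l) (θ q))
            + (v (σ l) (θ q) - v (σ l) t)‖ := by congr 1; abel
      _ ≤ ‖v (σ k) t - v (σ k) (θ q)‖ + ‖v (σ k) (θ q) - v (σ l) (θ q)‖
            + ‖v (σ l) (θ q) - v (σ l) t‖ := norm_add₃_le
      _ ≤ ε/3 + ε/3 + ε/3 := by
          refine add_le_add (add_le_add h1 h3) ?_
          rw [norm_sub_rev]
          exact h2
      _ = ε := by ring
  have hι'inj : Function.Injective ⇑ι' := hι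
  have hmemLp : ∀ n, MemLp (u n) p μ := by
    intro n
    refine ⟨humeas n, ?_⟩
    have hb : ∀ᵐ t ∂μ, ‖u n t‖ ≤ ‖K₀ * ν (u n t)‖ := by
      filter_upwards [ae_restrict_mem measurableSet_Ioc] with t ht
      exact (hembK _ (huS n t ⟨ht.1.le, ht.2⟩)).trans (le_abs_self _)
    calc eLpNorm (u n) p μ ≤ eLpNorm (fun t => K₀ * ν (u n t)) p μ := eLpNorm_mono_ae hb
      _ = (‖K₀‖₊ : ℝ≥0∞) * eLpNorm (fun t => ν (u n t)) p μ := by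
          exact eLpNorm_const_smul (μ := μ) (p := p) K₀ (fun t => ν (u n t))
      _ ≤ (‖K₀‖₊ : ℝ≥0∞) * ENNReal.ofReal Kr := by gcongr; exact hνK n
      _ < ⊤ := ENNReal.mul_lt_top ENNReal.coe_lt_top ENNReal.ofReal_lt_top
  set MT : ℝ≥0∞ := (ENNReal.ofReal T) ^ p.toReal⁻¹ with hMT_def
  have hMTne : MT ≠ ⊤ := by
    rw [hMT_def]
    exact ENNReal.rpow_ne_top_of_nonneg (by positivity) ENNReal.ofReal_ne_top
  have hμuniv : μ Set.univ = ENNReal.ofReal T := by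
    rw [hμ_def, Measure.restrict_apply_univ, Real.volume_Ioc, sub_zero]
  have hvmeas : ∀ n, AEStronglyMeasurable (v n) μ := by
    intro n
    exact ((hvcont n).mono Set.Ioc_subset_Icc_self).aestronglyMeasurable measurableSet_Ioc
  have hKey : ∀ ε : ℝ, 0 < ε → ∃ N, ∀ k l, N ≤ k → N ≤ l →
      eLpNorm (fun t => u (σ k) t - u (σ l) t) p μ ≤ ENNReal.ofReal ε := by
    intro ε hε
    set ε₁ := ε / (4 * (Kr + 1)) with hε₁_def
    have hε₁0 : 0 < ε₁ := by positivity
    obtain ⟨Cε, hCε0, hCε⟩ := dub_ehrling ι' hι'inj S ν hcone hν0 hνeq0 hνhom K₀ hembK hcpt ε₁ hε₁0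
    set ε₂ := (ε / 2) / ((Cε + 1) * (MT.toReal + 1)) with hε₂_def
    have hMT0 : 0 ≤ MT.toReal := ENNReal.toReal_nonneg
    have hε₂0 : 0 < ε₂ := by positivity
    obtain ⟨N, hN⟩ := hUC ε₂ hε₂0
    refine ⟨N, fun k l hk hl => ?_⟩
    set f1 : ℝ → ℝ := fun t => ε₁ • ν (u (σ k) t) with hf1_def
    set f2 : ℝ → ℝ := fun t => ε₁ • ν (u (σ l) t) with hf2_def
    set f3 : ℝ → ℝ := fun t => Cε • ‖v (σ k) t - v (σ l) t‖ with hf3_def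
    have hae : ∀ᵐ t ∂μ, ‖u (σ k) t - u (σ l) t‖ ≤ ‖(f1 + f2 + f3) t‖ := by
      filter_upwards [ae_restrict_mem measurableSet_Ioc, hGall] with t ht hid
      have hIcc : t ∈ Set.Icc (0:ℝ) T := ⟨ht.1.le, ht.2⟩
      have h1 := hCε (u (σ k) t) (huS _ _ hIcc) (u (σ l) t) (huS _ _ hIcc)
      have h2 : ι' (u (σ k) t) = v (σ k) t := by rw [hι'coe]; exact hid (σ k)
      have h3 : ι' (u (σ l) t) = v (σ l) t := by rw [hι'coe]; exact hid (σ l)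
      rw [h2, h3] at h1
      have h4 : (f1 + f2 + f3) t = ε₁ * ν (u (σ k) t) + ε₁ * ν (u (σ l) t)
          + Cε * ‖v (σ k) t - v (σ l) t‖ := by
        simp [hf1_def, hf2_def, hf3_def, smul_eq_mul]
      rw [h4]
      refine le_trans ?_ (le_abs_self _)
      calc ‖u (σ k) t - u (σ l) t‖
          ≤ ε₁ * (ν (u (σ k) t) + ν (u (σ l) t)) + Cε * ‖v (σ k) t - v (σ l) t‖ := h1
        _ = ε₁ * ν (u (σ k) t) + ε₁ * ν (u (σ l) t) + Cε * ‖v (σ k) t - v (σ l) t‖ := by ring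
    have hm1 : AEStronglyMeasurable f1 μ :=
      (((hνmeas (σ k)).const_mul ε₁).congr (by simp [hf1_def, smul_eq_mul])).aestronglyMeasurable
    have hm2 : AEStronglyMeasurable f2 μ :=
      (((hνmeas (σ l)).const_mul ε₁).congr (by simp [hf2_def, smul_eq_mul])).aestronglyMeasurable
    have hm3 : AEStronglyMeasurable f3 μ := by
      have := (((hvmeas (σ k)).sub (hvmeas (σ l))).norm).const_smul Cε
      exact this.congr (Eventually.of_forall fun t => by simp [hf3_def])
    have hstep1 : eLpNorm (fun t => u (σ k) t - u (σ l) t) p μ ≤ eLpNorm (f1 + f2 + f3) p μ :=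
      eLpNorm_mono_ae hae
    have hstep2 : eLpNorm (f1 + f2 + f3) p μ
        ≤ eLpNorm f1 p μ + eLpNorm f2 p μ + eLpNorm f3 p μ :=
      le_trans (eLpNorm_add_le (hm1.add hm2) hm3 hp)
        (add_le_add_left (eLpNorm_add_le hm1 hm2 hp) _)
    have hb1 : eLpNorm f1 p μ ≤ ENNReal.ofReal (ε/4) := by
      rw [hf1_def]
      calc eLpNorm (fun t => ε₁ • ν (u (σ k) t)) p μ
          = (‖ε₁‖₊ : ℝ≥0∞) * eLpNorm (fun t => ν (u (σ k) t)) p μ :=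
            eLpNorm_const_smul (μ := μ) (p := p) ε₁ (fun t => ν (u (σ k) t))
        _ ≤ ENNReal.ofReal ε₁ * ENNReal.ofReal Kr := by
            rw [← enorm_eq_nnnorm, Real.enorm_of_nonneg hε₁0.le]
            gcongr
            exact hνK (σ k)
        _ = ENNReal.ofReal (ε₁ * Kr) := (ENNReal.ofReal_mul hε₁0.le).symm
        _ ≤ ENNReal.ofReal (ε/4) := by
            refine ENNReal.ofReal_le_ofReal ?_
            rw [hε₁_def]
            rw [div_mul_eq_mul_div, div_le_div_iff₀ (by positivity) (by norm_num)]
            nlinarith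
    have hb2 : eLpNorm f2 p μ ≤ ENNReal.ofReal (ε/4) := by
      rw [hf2_def]
      calc eLpNorm (fun t => ε₁ • ν (u (σ l) t)) p μ
          = (‖ε₁‖₊ : ℝ≥0∞) * eLpNorm (fun t => ν (u (σ l) t)) p μ :=
            eLpNorm_const_smul (μ := μ) (p := p) ε₁ (fun t => ν (u (σ l) t))
        _ ≤ ENNReal.ofReal ε₁ * ENNReal.ofReal Kr := by
            rw [← enorm_eq_nnnorm, Real.enorm_of_nonneg hε₁0.le]
            gcongr
            exact hνK (σ l)
        _ = ENNReal.ofReal (ε₁ * Kr) := (ENNReal.ofReal_mul hε₁0.le).symm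
        _ ≤ ENNReal.ofReal (ε/4) := by
            refine ENNReal.ofReal_le_ofReal ?_
            rw [hε₁_def]
            rw [div_mul_eq_mul_div, div_le_div_iff₀ (by positivity) (by norm_num)]
            nlinarith
    have hb3 : eLpNorm f3 p μ ≤ ENNReal.ofReal (ε/2) := by
      have hbd : ∀ᵐ t ∂μ, ‖f3 t‖ ≤ Cε * ε₂ := by
        filter_upwards [ae_restrict_mem measurableSet_Ioc] with t ht
        have hIcc : t ∈ Set.Icc (0:ℝ) T := ⟨ht.1.le, ht.2⟩
        have h1 : ‖v (σ k) t - v (σ l) t‖ ≤ ε₂ := hN k l hk hl t hIcc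
        have h2 : ‖f3 t‖ = Cε * ‖v (σ k) t - v (σ l) t‖ := by
          rw [hf3_def]
          simp only [smul_eq_mul, Real.norm_eq_abs, abs_mul,
            abs_of_nonneg hCε0.le, abs_norm]
        rw [h2]
        exact mul_le_mul_of_nonneg_left h1 hCε0.le
      calc eLpNorm f3 p μ ≤ μ Set.univ ^ p.toReal⁻¹ * ENNReal.ofReal (Cε * ε₂) :=
            eLpNorm_le_of_ae_bound hbd
        _ = MT * ENNReal.ofReal (Cε * ε₂) := by rw [hμuniv, hMT_def]
        _ = ENNReal.ofReal (MT.toReal * (Cε * ε₂)) := by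
            rw [ENNReal.ofReal_mul hMT0, ENNReal.ofReal_toReal hMTne]
        _ ≤ ENNReal.ofReal (ε/2) := by
            refine ENNReal.ofReal_le_ofReal ?_
            have hP : (0:ℝ) < (Cε + 1) * (MT.toReal + 1) := by positivity
            calc MT.toReal * (Cε * ε₂)
                = (MT.toReal * Cε) * (ε/2) / ((Cε + 1) * (MT.toReal + 1)) := by
                  rw [hε₂_def]; ring
              _ ≤ ((Cε + 1) * (MT.toReal + 1)) * (ε/2) / ((Cε + 1) * (MT.toReal + 1)) := by
                  gcongr ?_ * _ / _
                  nlinarith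
              _ = ε/2 := by field_simp
    calc eLpNorm (fun t => u (σ k) t - u (σ l) t) p μ
        ≤ eLpNorm f1 p μ + eLpNorm f2 p μ + eLpNorm f3 p μ := hstep1.trans hstep2
      _ ≤ ENNReal.ofReal (ε/4) + ENNReal.ofReal (ε/4) + ENNReal.ofReal (ε/2) :=
          add_le_add (add_le_add hb1 hb2) hb3
      _ = ENNReal.ofReal ε := by
          rw [← ENNReal.ofReal_add (by positivity) (by positivity),
            ← ENNReal.ofReal_add (by positivity) (by positivity)]
          congr 1
          ring
  haveI : Fact (1 ≤ p) := ⟨hp⟩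
  set fk : ℕ → Lp A₀ p μ := fun k => (hmemLp (σ k)).toLp (u (σ k)) with hfk_def
  have hcauchy : CauchySeq fk := by
    refine Metric.cauchySeq_iff.2 fun ε hε => ?_
    obtain ⟨N, hN⟩ := hKey (ε/2) (by positivity)
    refine ⟨N, fun k hk l hl => ?_⟩
    have he : eLpNorm (⇑(fk k) - ⇑(fk l)) p μ
        = eLpNorm (fun t => u (σ k) t - u (σ l) t) p μ := by
      apply eLpNorm_congr_ae
      filter_upwards [MemLp.coeFn_toLp (hmemLp (σ k)), MemLp.coeFn_toLp (hmemLp (σ l))]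
        with t h1 h2
      simp only [Pi.sub_apply]
      rw [h1, h2]
    rw [Lp.dist_def, he]
    calc (eLpNorm (fun t => u (σ k) t - u (σ l) t) p μ).toReal
        ≤ ε/2 := ENNReal.toReal_le_of_le_ofReal (by positivity) (hN k l hk hl)
      _ < ε := by linarith
  obtain ⟨Flim, hFlim⟩ := cauchySeq_tendsto_of_complete hcauchy
  refine ⟨σ, hσmono, ⇑Flim, ?_⟩
  have heq : ∀ j, eLpNorm (fun t => u (σ j) t - Flim t) p μ = ENNReal.ofReal ‖fk j - Flim‖ := by
    intro j
    have h1 : eLpNorm (fun t => u (σ j) t - Flim t) p μ = eLpNorm (⇑(fk j - Flim)) p μ := by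
      apply eLpNorm_congr_ae
      filter_upwards [MemLp.coeFn_toLp (hmemLp (σ j)), Lp.coeFn_sub (fk j) Flim] with t h1 h2
      rw [h2, Pi.sub_apply, h1]
    rw [h1, Lp.norm_def, ENNReal.ofReal_toReal (Lp.eLpNorm_ne_top _)]
  have hnorm0 : Tendsto (fun j => ‖fk j - Flim‖) atTop (𝓝 0) :=
    tendsto_iff_norm_sub_tendsto_zero.1 hFlim
  have hof : Tendsto (fun j => ENNReal.ofReal ‖fk j - Flim‖) atTop (𝓝 0) := by
    have h0 : (𝓝 (0:ℝ≥0∞)) = 𝓝 (ENNReal.ofReal 0) := by simp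
    rw [h0]
    exact (ENNReal.continuous_ofReal.tendsto 0).comp hnorm0
  exact Tendsto.congr (fun j => (heq j).symm) hof
end
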